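/- Let g : [0,∞) → ℝ be a positive, strictly increasing, differentiable function, let k > 0, let q ∈ (0,1), and let λ > 0 and μ > 0 be real numbers. Then for all x, y with 0 < x < y, the following strict double inequality holds: g(0)^λ·e^{(λγ/k)(g(0)−g(x))}·Γ_k(g(0))^λ / (g(x)^λ·k^{(λ/k)(g(0)−g(x))}·(1−q)^{(μ/k)(g(0)−g(x))}·Γ_{(q,k)}(g(0))^μ) < Γ_k(g(x))^λ / Γ_{(q,k)}(g(x))^μ < g(y)^λ·e^{(λγ/k)(g(y)−g(x))}·Γ_k(g(y))^λ / (g(x)^λ·k^{(λ/k)(g(y)−g(x))}·(1−q)^{(μ/k)(g(y)−g(x))}·Γ_{(q,k)}(g(y))^μ). -/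

import Mathlib

open Real

/-- `[p]_q = (1 - q^p)/(1 - q)` -/
noncomputable def pnq (p : ℕ) (q : ℝ) : ℝ := (1 - q ^ p) / (1 - q)

/-- q-psi function via its series representation. -/
noncomputable def psiq (q s : ℝ) : ℝ :=
  -Real.log (1 - q) + Real.log q * ∑' n : ℕ, q ^ (((n : ℝ) + 1) * s) / (1 - q ^ (n + 1))

/-- (p,q)-psi function via its series representation. -/
noncomputable def psipq (p : ℕ) (q s : ℝ) : ℝ :=
  Real.log (pnq p q) +
    Real.log q * ∑ n ∈ Finset.range p, q ^ (((n : ℝ) + 1) * s) / (1 - q ^ (n + 1))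

/-- k-psi function via its series representation. -/
noncomputable def psik (k s : ℝ) : ℝ :=
  (Real.log k - Real.eulerMascheroniConstant) / k - 1 / s +
    ∑' n : ℕ, s / (((n : ℝ) + 1) * k * (((n : ℝ) + 1) * k + s))

/-- (q,k)-psi function via its series representation. -/
noncomputable def psiqk (q k s : ℝ) : ℝ :=
  -Real.log (1 - q) / k +
    Real.log q * ∑' n : ℕ, q ^ (((n : ℝ) + 1) * k * s) / (1 - q ^ (((n : ℝ) + 1) * k))

/-- Normalized q-Gamma function. -/
noncomputable def Gammaq (q s : ℝ) : ℝ :=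
  (1 - q) ^ (-s) *
    Real.exp (∑' n : ℕ, q ^ (((n : ℝ) + 1) * s) / (((n : ℝ) + 1) * (1 - q ^ (n + 1))))

/-- Normalized (p,q)-Gamma function. -/
noncomputable def Gammapq (p : ℕ) (q s : ℝ) : ℝ :=
  (pnq p q) ^ s *
    Real.exp (∑ n ∈ Finset.range p, q ^ (((n : ℝ) + 1) * s) / (((n : ℝ) + 1) * (1 - q ^ (n + 1))))

/-- Normalized (q,k)-Gamma function. -/
noncomputable def Gammaqk (q k s : ℝ) : ℝ :=
  (1 - q) ^ (-s / k) *
    Real.exp (∑' n : ℕ,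
      q ^ (((n : ℝ) + 1) * k * s) / (((n : ℝ) + 1) * k * (1 - q ^ (((n : ℝ) + 1) * k))))

/-- k-Gamma function. -/
noncomputable def Gammak (k s : ℝ) : ℝ :=
  ∫ x in Set.Ioi (0 : ℝ), Real.exp (-(x ^ k) / k) * x ^ (s - 1)


open Real Set MeasureTheory

local notation "γ" => Real.eulerMascheroniConstant

lemma gammak_eq {k s : ℝ} (hk : 0 < k) (hs : 0 < s) :
    Gammak k s = k ^ (s / k - 1) * Real.Gamma (s / k) := by
  have hk' : k ≠ 0 := hk.ne'
  set g1 : ℝ → ℝ := fun y => (1 / k) * (Real.exp (-(y / k)) * y ^ (s / k - 1)) with hg1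
  have step1 : Gammak k s = ∫ x in Ioi (0:ℝ), (k * x ^ (k - 1)) • g1 (x ^ k) := by
    rw [Gammak]
    refine setIntegral_congr_fun measurableSet_Ioi (fun x hx => ?_)
    have hx0 : (0:ℝ) < x := hx
    have hxk : (0:ℝ) < x ^ k := rpow_pos_of_pos hx0 k
    rw [hg1]
    simp only [smul_eq_mul]
    rw [← Real.rpow_mul hx0.le k (s / k - 1)]
    have he : k * (s / k - 1) = s - k := by field_simp
    rw [he]
    rw [show -(x ^ k) / k = -(x ^ k / k) by ring]
    have : k * x ^ (k - 1) * (1 / k * (Real.exp (-(x ^ k / k)) * x ^ (s - k))) =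
        Real.exp (-(x ^ k / k)) * (x ^ (k - 1) * x ^ (s - k)) := by
      field_simp
    rw [this, ← Real.rpow_add hx0]
    norm_num
  have step2 : (∫ x in Ioi (0:ℝ), (k * x ^ (k - 1)) • g1 (x ^ k)) = ∫ y in Ioi (0:ℝ), g1 y :=
    integral_comp_rpow_Ioi_of_pos hk
  have step3 : (∫ y in Ioi (0:ℝ), g1 y) = k ^ (s / k - 1) * Real.Gamma (s / k) := by
    have h := integral_comp_mul_left_Ioi g1 0 hk
    rw [mul_zero] at h
    have h2 : (∫ x in Ioi (0:ℝ), g1 (k * x)) =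
        ∫ x in Ioi (0:ℝ), (1 / k * k ^ (s / k - 1)) • (Real.exp (-x) * x ^ (s / k - 1)) := by
      refine setIntegral_congr_fun measurableSet_Ioi (fun x hx => ?_)
      have hx0 : (0:ℝ) < x := hx
      rw [hg1]
      simp only [smul_eq_mul]
      rw [mul_comm k x, mul_div_assoc, div_self hk', mul_one,
        Real.mul_rpow hx0.le hk.le]
      ring
    rw [h2, integral_smul] at h
    rw [Real.Gamma_eq_integral (by positivity : (0:ℝ) < s / k)]
    rw [smul_eq_mul, smul_eq_mul] at h
    have h' : (∫ x in Ioi (0:ℝ), g1 x) = k * (1 / k * k ^ (s / k - 1) *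
        ∫ a in Ioi (0:ℝ), Real.exp (-a) * a ^ (s / k - 1)) := by
      rw [h]; field_simp
    rw [h']
    field_simp
  rw [step1, step2, step3]

lemma Gmono {s t : ℝ} (hs : 1 < s) (hst : s < t) :
    Real.log (Real.Gamma s) + γ * s ≤ Real.log (Real.Gamma t) + γ * t := by
  set G : ℝ → ℝ := fun v => Real.log (Real.Gamma v) + γ * v with hG
  have hlin : ConvexOn ℝ (Ioi (0:ℝ)) (fun v : ℝ => γ * v) := by
    refine ⟨convex_Ioi 0, fun x _ y _ a b _ _ _ => ?_⟩
    simp only [smul_eq_mul]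
    exact le_of_eq (by ring)
  have hconv : ConvexOn ℝ (Ioi (0:ℝ)) G := by
    have := Real.convexOn_log_Gamma.add hlin
    exact this
  have hder : HasDerivAt G 0 1 := by
    have h1 : HasDerivAt (fun v => Real.log (Real.Gamma v)) (-γ / Real.Gamma 1) 1 :=
      (Real.hasDerivAt_Gamma_one).log (by simp [Real.Gamma_one])
    have h2 : HasDerivAt (fun v : ℝ => γ * v) (γ * 1) 1 := (hasDerivAt_id (1:ℝ)).const_mul γ
    have := h1.add h2
    simp only [Real.Gamma_one, div_one, mul_one, neg_add_cancel] at this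
    exact this
  have h1s : (0:ℝ) ≤ (G s - G 1) / (s - 1) := by
    have := hconv.le_slope_of_hasDerivAt (mem_Ioi.mpr one_pos)
      (mem_Ioi.mpr (by linarith : (0:ℝ) < s)) hs hder
    rwa [slope_def_field] at this
  have h2s : (G s - G 1) / (s - 1) ≤ (G t - G s) / (t - s) :=
    hconv.slope_mono_adjacent (mem_Ioi.mpr one_pos) (mem_Ioi.mpr (by linarith)) hs hst
  have h3 : (0:ℝ) ≤ (G t - G s) / (t - s) := le_trans h1s h2s
  have h4 : (0:ℝ) ≤ G t - G s := by
    have hts : (0:ℝ) < t - s := by linarith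
    calc (0:ℝ) = 0 * (t - s) := by ring
    _ ≤ (G t - G s) / (t - s) * (t - s) := by
        exact mul_le_mul_of_nonneg_right h3 hts.le
    _ = G t - G s := by field_simp
  simp only [hG] at h4
  linarith

lemma gammapart {k a b : ℝ} (hk : 0 < k) (ha : 0 < a) (hab : a < b) :
    Real.log a + γ * a / k - a / k * Real.log k + Real.log (Gammak k a) ≤
      Real.log b + γ * b / k - b / k * Real.log k + Real.log (Gammak k b) := by
  have hb : 0 < b := ha.trans hab
  have hlogG : ∀ c : ℝ, 0 < c → Real.log (Gammak k c) =
      (c / k - 1) * Real.log k + Real.log (Real.Gamma (c / k)) := by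
    intro c hc
    rw [gammak_eq hk hc, Real.log_mul (by positivity) (Real.Gamma_pos_of_pos (by positivity)).ne',
      Real.log_rpow hk]
  rw [hlogG a ha, hlogG b hb]
  have key : ∀ c : ℝ, 0 < c → Real.log c + Real.log (Real.Gamma (c / k)) =
      Real.log (Real.Gamma (c / k + 1)) + Real.log k := by
    intro c hc
    have hck : (0:ℝ) < c / k := by positivity
    rw [Real.Gamma_add_one hck.ne', Real.log_mul hck.ne'
      (Real.Gamma_pos_of_pos hck).ne', Real.log_div hc.ne' hk.ne']
    ring
  have hm := Gmono (s := a / k + 1) (t := b / k + 1)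
    (by nlinarith [div_pos ha hk])
    (by have h : a / k < b / k := by gcongr
        linarith)
  have h1 := key a ha
  have h2 := key b hb
  have e1 : γ * a / k = γ * (a / k) := by ring
  have e2 : γ * b / k = γ * (b / k) := by ring
  nlinarith [hm]

lemma qterm_eq {q k t : ℝ} (hq0 : 0 < q) (n : ℕ) :
    q ^ (((n : ℝ) + 1) * k * t) = (q ^ (k * t)) ^ (n + 1) := by
  rw [← Real.rpow_natCast (q ^ (k * t)) (n + 1), ← Real.rpow_mul hq0.le]
  push_cast
  ring_nf

lemma qdenpos {q k : ℝ} (hq0 : 0 < q) (hq1 : q < 1) (hk : 0 < k) (n : ℕ) :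
    0 < ((n : ℝ) + 1) * k * (1 - q ^ (((n : ℝ) + 1) * k)) := by
  have hn : (0:ℝ) ≤ (n : ℝ) := Nat.cast_nonneg n
  have h1 : q ^ (((n : ℝ) + 1) * k) < 1 := Real.rpow_lt_one hq0.le hq1 (by positivity)
  have h2 : (0:ℝ) < (n : ℝ) + 1 := by positivity
  exact mul_pos (mul_pos h2 hk) (by linarith)

lemma qsummable {q k t : ℝ} (hq0 : 0 < q) (hq1 : q < 1) (hk : 0 < k) (ht : 0 < t) :
    Summable (fun n : ℕ =>
      q ^ (((n : ℝ) + 1) * k * t) / (((n : ℝ) + 1) * k * (1 - q ^ (((n : ℝ) + 1) * k)))) := by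
  have hr0 : 0 < q ^ (k * t) := Real.rpow_pos_of_pos hq0 _
  have hr1 : q ^ (k * t) < 1 := Real.rpow_lt_one hq0.le hq1 (by positivity)
  have hgeom : Summable (fun n : ℕ => (1 / (k * (1 - q ^ k))) * (q ^ (k * t)) ^ (n + 1)) := by
    apply Summable.mul_left
    have := (summable_geometric_of_lt_one hr0.le hr1).mul_right (q ^ (k * t))
    simpa [pow_succ] using this
  have hqk1 : q ^ k < 1 := Real.rpow_lt_one hq0.le hq1 hk
  have hqkpos : (0:ℝ) < k * (1 - q ^ k) := mul_pos hk (by linarith)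
  apply Summable.of_nonneg_of_le
    (fun n => le_of_lt (div_pos (Real.rpow_pos_of_pos hq0 _) (qdenpos hq0 hq1 hk n)))
    (fun n => ?_) hgeom
  have hden : k * (1 - q ^ k) ≤ ((n : ℝ) + 1) * k * (1 - q ^ (((n : ℝ) + 1) * k)) := by
    have hn : (0:ℝ) ≤ (n : ℝ) := Nat.cast_nonneg n
    have h1 : q ^ (((n : ℝ) + 1) * k) ≤ q ^ k := by
      apply Real.rpow_le_rpow_of_exponent_ge hq0 hq1.le
      nlinarith
    have h2 : (0:ℝ) < 1 - q ^ (((n : ℝ) + 1) * k) := by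
      have := Real.rpow_lt_one hq0.le hq1 (show (0:ℝ) < ((n:ℝ)+1)*k by positivity)
      linarith
    have s1 : k * (1 - q ^ k) ≤ k * (1 - q ^ (((n : ℝ) + 1) * k)) :=
      mul_le_mul_of_nonneg_left (by linarith) hk.le
    nlinarith [mul_nonneg hn (mul_pos hk h2).le]
  have hq' : q ^ (((n : ℝ) + 1) * k * t) = (q ^ (k * t)) ^ (n + 1) := by
    rw [← Real.rpow_natCast (q ^ (k * t)) (n + 1), ← Real.rpow_mul hq0.le]
    push_cast
    ring_nf
  rw [hq']
  calc ((q ^ (k * t)) ^ (n + 1)) / (((n : ℝ) + 1) * k * (1 - q ^ (((n : ℝ) + 1) * k)))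
      ≤ ((q ^ (k * t)) ^ (n + 1)) / (k * (1 - q ^ k)) :=
        div_le_div_of_nonneg_left (pow_pos hr0 _).le hqkpos hden
  _ = (1 / (k * (1 - q ^ k))) * (q ^ (k * t)) ^ (n + 1) := by ring

lemma qpart {q k a b : ℝ} (hq0 : 0 < q) (hq1 : q < 1) (hk : 0 < k) (ha : 0 < a) (hab : a < b) :
    (∑' n : ℕ, q ^ (((n : ℝ) + 1) * k * b) / (((n : ℝ) + 1) * k * (1 - q ^ (((n : ℝ) + 1) * k)))) <
    (∑' n : ℕ, q ^ (((n : ℝ) + 1) * k * a) / (((n : ℝ) + 1) * k * (1 - q ^ (((n : ℝ) + 1) * k)))) := by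
  have hb : 0 < b := ha.trans hab
  have hlt : ∀ n : ℕ, q ^ (((n : ℝ) + 1) * k * b) < q ^ (((n : ℝ) + 1) * k * a) := by
    intro n
    apply Real.rpow_lt_rpow_of_exponent_gt hq0 hq1
    have hn : (0:ℝ) ≤ (n : ℝ) := Nat.cast_nonneg n
    have h2 : (0:ℝ) < ((n : ℝ) + 1) * k := by positivity
    nlinarith
  refine Summable.tsum_lt_tsum_of_nonneg (i := 0)
    (fun n => le_of_lt (div_pos (Real.rpow_pos_of_pos hq0 _) (qdenpos hq0 hq1 hk n)))
    (fun n => div_le_div_of_nonneg_right (hlt n).le (qdenpos hq0 hq1 hk n).le) ?_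
    (qsummable hq0 hq1 hk ha)
  exact div_lt_div_of_pos_right (hlt 0) (qdenpos hq0 hq1 hk 0)

lemma log_Gammaqk {q k s : ℝ} (hq1 : q < 1) :
    Real.log (Gammaqk q k s) = (-s / k) * Real.log (1 - q) +
      (∑' n : ℕ, q ^ (((n : ℝ) + 1) * k * s) /
        (((n : ℝ) + 1) * k * (1 - q ^ (((n : ℝ) + 1) * k)))) := by
  have h1q : (0:ℝ) < 1 - q := by linarith
  rw [Gammaqk, Real.log_mul (by positivity) (Real.exp_ne_zero _), Real.log_rpow h1q,
    Real.log_exp]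

lemma Gammaqk_pos {q k s : ℝ} (hq1 : q < 1) : 0 < Gammaqk q k s := by
  have h1q : (0:ℝ) < 1 - q := by linarith
  exact mul_pos (Real.rpow_pos_of_pos h1q _) (Real.exp_pos _)

lemma Gammak_pos {k s : ℝ} (hk : 0 < k) (hs : 0 < s) : 0 < Gammak k s := by
  rw [gammak_eq hk hs]
  exact mul_pos (Real.rpow_pos_of_pos hk _) (Real.Gamma_pos_of_pos (by positivity))

lemma Phi_lt {k q lam mu a b : ℝ} (hk : 0 < k) (hq0 : 0 < q) (hq1 : q < 1)
    (hlam : 0 < lam) (hmu : 0 < mu) (ha : 0 < a) (hab : a < b) :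
    lam * (Real.log a + γ * a / k - a / k * Real.log k + Real.log (Gammak k a)) -
      mu * (a / k * Real.log (1 - q) + Real.log (Gammaqk q k a)) <
    lam * (Real.log b + γ * b / k - b / k * Real.log k + Real.log (Gammak k b)) -
      mu * (b / k * Real.log (1 - q) + Real.log (Gammaqk q k b)) := by
  rw [log_Gammaqk hq1, log_Gammaqk hq1]
  have h1 := gammapart hk ha hab
  have h2 := qpart hq0 hq1 hk ha hab
  set Sa := (∑' n : ℕ, q ^ (((n : ℝ) + 1) * k * a) /
      (((n : ℝ) + 1) * k * (1 - q ^ (((n : ℝ) + 1) * k)))) with hSa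
  set Sb := (∑' n : ℕ, q ^ (((n : ℝ) + 1) * k * b) /
      (((n : ℝ) + 1) * k * (1 - q ^ (((n : ℝ) + 1) * k)))) with hSb
  have h3 := mul_le_mul_of_nonneg_left h1 hlam.le
  have h4 := mul_lt_mul_of_pos_left h2 hmu
  ring_nf at h3 h4 ⊢
  linarith

theorem stmt7 (g : ℝ → ℝ) (hgpos : ∀ t ∈ Set.Ici (0 : ℝ), 0 < g t)
    (hgmono : StrictMonoOn g (Set.Ici (0 : ℝ)))
    (hgdiff : DifferentiableOn ℝ g (Set.Ici (0 : ℝ)))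
    (k : ℝ) (hk : 0 < k) (q : ℝ) (hq : q ∈ Set.Ioo (0 : ℝ) 1)
    (lam mu : ℝ) (hlam : 0 < lam) (hmu : 0 < mu)
    (x y : ℝ) (hx : 0 < x) (hxy : x < y) :
    (g 0) ^ lam * Real.exp (lam * Real.eulerMascheroniConstant / k * (g 0 - g x)) *
        (Gammak k (g 0)) ^ lam /
        ((g x) ^ lam * k ^ (lam / k * (g 0 - g x)) * (1 - q) ^ (mu / k * (g 0 - g x)) *
          (Gammaqk q k (g 0)) ^ mu) <
      (Gammak k (g x)) ^ lam / (Gammaqk q k (g x)) ^ mu ∧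
    (Gammak k (g x)) ^ lam / (Gammaqk q k (g x)) ^ mu <
      (g y) ^ lam * Real.exp (lam * Real.eulerMascheroniConstant / k * (g y - g x)) *
        (Gammak k (g y)) ^ lam /
        ((g x) ^ lam * k ^ (lam / k * (g y - g x)) * (1 - q) ^ (mu / k * (g y - g x)) *
          (Gammaqk q k (g y)) ^ mu) := by
  obtain ⟨hq0, hq1⟩ := hq
  have h1q : (0:ℝ) < 1 - q := by linarith
  have hg0 : 0 < g 0 := hgpos 0 Set.self_mem_Ici
  have hgx : 0 < g x := hgpos x hx.le
  have hgy : 0 < g y := hgpos y (hx.trans hxy).le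
  have h0x : g 0 < g x := hgmono Set.self_mem_Ici hx.le hx
  have hxy' : g x < g y := hgmono hx.le (hx.trans hxy).le hxy
  have hGk0 : 0 < Gammak k (g 0) := Gammak_pos hk hg0
  have hGkx : 0 < Gammak k (g x) := Gammak_pos hk hgx
  have hGky : 0 < Gammak k (g y) := Gammak_pos hk hgy
  have hGq0 : 0 < Gammaqk q k (g 0) := Gammaqk_pos hq1
  have hGqx : 0 < Gammaqk q k (g x) := Gammaqk_pos hq1
  have hGqy : 0 < Gammaqk q k (g y) := Gammaqk_pos hq1
  constructor
  · have hPhi := Phi_lt hk hq0 hq1 hlam hmu hg0 h0x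
    rw [Real.rpow_def_of_pos hg0 lam, Real.rpow_def_of_pos hGk0 lam,
      Real.rpow_def_of_pos hgx lam, Real.rpow_def_of_pos hk, Real.rpow_def_of_pos h1q,
      Real.rpow_def_of_pos hGq0 mu, Real.rpow_def_of_pos hGkx lam,
      Real.rpow_def_of_pos hGqx mu, ← Real.exp_add, ← Real.exp_add, ← Real.exp_add,
      ← Real.exp_add, ← Real.exp_add, ← Real.exp_sub, ← Real.exp_sub, Real.exp_lt_exp]
    ring_nf at hPhi ⊢
    linarith
  · have hPhi := Phi_lt hk hq0 hq1 hlam hmu hgx hxy'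
    rw [Real.rpow_def_of_pos hgy lam, Real.rpow_def_of_pos hGky lam,
      Real.rpow_def_of_pos hgx lam, Real.rpow_def_of_pos hk, Real.rpow_def_of_pos h1q,
      Real.rpow_def_of_pos hGqy mu, Real.rpow_def_of_pos hGkx lam,
      Real.rpow_def_of_pos hGqx mu, ← Real.exp_add, ← Real.exp_add, ← Real.exp_add,
      ← Real.exp_add, ← Real.exp_add, ← Real.exp_sub, ← Real.exp_sub, Real.exp_lt_exp]
    ring_nf at hPhi ⊢
    linarith
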